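/- Consider the octahedron spin system of N = 6 spins with coupling constant J > 0: label the spins 1,…,6 so that the antipodal (non-adjacent) pairs are {1,6}, {2,5}, {3,4}, and every other pair of distinct spins is adjacent; the energy is H₀(s) = J ∑ ⟨s_μ, s_ν⟩, summed over all ordered pairs (μ,ν) of distinct adjacent spins. Then for every S with 0 ≤ S ≤ 6, the maximal energy among states with total spin length S equals (2/3)·J·S²: every state s with ‖∑_μ s_μ‖ = S satisfies H₀(s) ≤ (2/3)·J·S², and there is such a state attaining this value. -/

import Mathlib

open scoped RealInnerProductSpace

/-- Two vertices of the octahedron (labelled by `Fin 6`) are adjacent iff they are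
distinct and not antipodal, the antipodal pairs being `{0,5}, {1,4}, {2,3}`
(i.e. `{1,6}, {2,5}, {3,4}` in 1-based labelling). -/
def octaAdj (μ ν : Fin 6) : Prop := μ ≠ ν ∧ (μ : ℕ) + (ν : ℕ) ≠ 5

instance : DecidableRel octaAdj := fun _ _ => instDecidableAnd

/-- The energy of the octahedron spin system with coupling `J`:
`J` times the sum of `⟨s_μ, s_ν⟩` over all ordered adjacent pairs. -/
noncomputable def octaEnergy (J : ℝ) (s : Fin 6 → EuclideanSpace ℝ (Fin 3)) : ℝ :=
  J * ∑ μ, ∑ ν, if octaAdj μ ν then ⟪s μ, s ν⟫ else 0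

theorem octahedron_relative_anti_ground_state_energy (J : ℝ) (hJ : 0 < J)
    (S : ℝ) (hS0 : 0 ≤ S) (hS6 : S ≤ 6) :
    (∀ s : Fin 6 → EuclideanSpace ℝ (Fin 3), (∀ μ, ‖s μ‖ = 1) →
      ‖∑ μ, s μ‖ = S → octaEnergy J s ≤ 2 / 3 * J * S ^ 2) ∧
    ∃ s : Fin 6 → EuclideanSpace ℝ (Fin 3), (∀ μ, ‖s μ‖ = 1) ∧
      ‖∑ μ, s μ‖ = S ∧ octaEnergy J s = 2 / 3 * J * S ^ 2 := by
  constructor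
  · intro s hnorm hsum
    have hT : ⟪(∑ μ, s μ), (∑ μ, s μ)⟫ = S ^ 2 := by
      rw [real_inner_self_eq_norm_sq, hsum]
    have hn : ∀ μ, ⟪s μ, s μ⟫ = 1 := by
      intro μ; rw [real_inner_self_eq_norm_sq, hnorm]; norm_num
    simp only [Fin.sum_univ_six] at hT
    norm_num [PiLp.inner_apply, RCLike.inner_apply, PiLp.add_apply, Fin.sum_univ_three,
      -inner_self_eq_norm_sq_to_K, -real_inner_self_eq_norm_sq]
      at hT hn
    have h0 := hn 0; have h1 := hn 1; have h2 := hn 2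
    have h3 := hn 3; have h4 := hn 4; have h5 := hn 5
    have q1 : ∀ i : Fin 3, (0:ℝ) ≤ (s 0 i + s 5 i - s 1 i - s 4 i)^2 := fun i => sq_nonneg _
    have q2 : ∀ i : Fin 3, (0:ℝ) ≤ (s 1 i + s 4 i - s 2 i - s 3 i)^2 := fun i => sq_nonneg _
    have q3 : ∀ i : Fin 3, (0:ℝ) ≤ (s 0 i + s 5 i - s 2 i - s 3 i)^2 := fun i => sq_nonneg _
    rw [show 2/3*J*S^2 = J*(2/3*S^2) by ring, octaEnergy]
    refine mul_le_mul_of_nonneg_left ?_ hJ.le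
    simp only [Fin.sum_univ_six]
    norm_num [octaAdj, Fin.ext_iff, PiLp.inner_apply, RCLike.inner_apply, Fin.sum_univ_three,
      show ((3:Fin 6):ℕ)=3 from rfl, show ((4:Fin 6):ℕ)=4 from rfl, show ((5:Fin 6):ℕ)=5 from rfl,
      -inner_self_eq_norm_sq_to_K, -real_inner_self_eq_norm_sq]
    linarith [q1 0, q1 1, q1 2, q2 0, q2 1, q2 2, q3 0, q3 1, q3 2]
  · set t : ℝ := S / 6 with ht
    set u : ℝ := Real.sqrt (1 - t ^ 2) with hu
    have ht1 : t ≤ 1 := by rw [ht]; linarith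
    have ht0 : 0 ≤ t := by rw [ht]; linarith
    have hu2 : u ^ 2 = 1 - t ^ 2 := Real.sq_sqrt (by nlinarith)
    refine ⟨fun μ => (WithLp.equiv 2 (Fin 3 → ℝ)).symm ![t, if (μ:ℕ) < 3 then u else -u, 0],
      ?_, ?_, ?_⟩
    · intro μ
      rw [EuclideanSpace.norm_eq]
      rcases lt_or_ge (μ:ℕ) 3 with h | h <;>
        simp [h, Fin.sum_univ_three, Real.sqrt_eq_one, Not.elim, sq_abs] <;>
        nlinarith [hu2]
    · simp only [Fin.sum_univ_six]
      rw [EuclideanSpace.norm_eq]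
      norm_num [Fin.sum_univ_three, PiLp.add_apply, sq_abs, Matrix.cons_val_two, Matrix.tail_cons,
        show ((3:Fin 6):ℕ)=3 from rfl, show ((4:Fin 6):ℕ)=4 from rfl,
        show ((5:Fin 6):ℕ)=5 from rfl]
      rw [show t+t+t+t+t+t = 6*t by ring, Real.sqrt_sq (by linarith)]
      rw [ht]; ring
    · rw [octaEnergy]
      simp only [Fin.sum_univ_six]
      norm_num [octaAdj, Fin.ext_iff, PiLp.inner_apply, RCLike.inner_apply, Fin.sum_univ_three,
        show ((3:Fin 6):ℕ)=3 from rfl, show ((4:Fin 6):ℕ)=4 from rfl,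
        show ((5:Fin 6):ℕ)=5 from rfl, -inner_self_eq_norm_sq_to_K, -real_inner_self_eq_norm_sq,
          Matrix.cons_val_two, Matrix.tail_cons]
      rw [ht]; ring
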